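/- Genus expansion under the Legendre-type change of variable: if log τ̃ = Σ_{g≥0} ε^{2g−2} F̃_g(t̃) and log τ = ε^{−2}F₀(t) + ΔF(t) with ΔF = Σ_{g≥1}ε^{2g−2}F_g, and the variables are related by x̃ = ∂ₓ log τ = x̂ + ε²∂ₓΔF (so that F̃_g(t̃) = Σ_{k≥0}(1/k!)(ε²∂ₓΔF)^k ∂^k_{x̂}F̃_g(t̂)), then comparing ε-coefficients in log τ̃ = log τ − x ∂ₓ log τ yields F̃₁(t̂) = F₁(t) and F̃₂(t̂) = F₂(t) − (1/(2v^n))(∂F₁/∂x)², where ∂²F̃₀/∂x̂² = −1/v^n. -/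

import Mathlib

noncomputable section

/-- genus expansion under the Legendre-type change of variable.
Working in the variable `X = ε²`: with `P = ε² ∂ₓΔF = Σ_{g≥1} X^g f'_g` (where `f_g = F_g(t)`,
`f'_g = ∂ₓF_g(t)`, and `b g k = ∂^k_x̂ F̃_g(t̂)`), the relation
`log τ̃ = log τ - x ∂ₓ log τ` together with the Taylor expansion
`F̃_g(t̃) = Σ_k (1/k!) (ε²∂ₓΔF)^k ∂^k_x̂ F̃_g(t̂)` reads, coefficientwise in `X`,
`Σ_{g+j=m} Σ_k (1/k!) (coeff_j P^k) b g k = f_m - x f'_m`.  Given `∂F̃₀/∂x̂ = -x`,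
`∂²F̃₀/∂x̂² = -1/vⁿ`, and the chain rule `∂F̃₁/∂x̂ = (1/vⁿ) ∂F₁/∂x`, comparing coefficients
yields `F̃₁(t̂) = F₁(t)` and `F̃₂(t̂) = F₂(t) - (1/(2vⁿ)) (∂F₁/∂x)²`. -/
theorem genus_expansion_legendre (f f' : ℕ → ℝ) (b : ℕ → ℕ → ℝ) (x vn : ℝ)
    (hvn : vn ≠ 0)
    (P : PowerSeries ℝ)
    (hP : P = PowerSeries.mk fun i => if i = 0 then 0 else f' i)
    (hser : ∀ m : ℕ,
      (∑ g ∈ Finset.range (m + 1), ∑ k ∈ Finset.range (m + 1),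
        (1 / (Nat.factorial k : ℝ)) * (PowerSeries.coeff (m - g) (P ^ k)) * b g k)
        = f m - x * f' m)
    (hb01 : b 0 1 = -x)
    (hb02 : b 0 2 = -1 / vn)
    (hb11 : b 1 1 = f' 1 * (1 / vn)) :
    b 1 0 = f 1 ∧ b 2 0 = f 2 - (1 / (2 * vn)) * (f' 1) ^ 2 := by
  have hc0 : PowerSeries.coeff 0 P = 0 := by simp [hP]
  have hc1 : PowerSeries.coeff 1 P = f' 1 := by simp [hP]
  have hc2 : PowerSeries.coeff 2 P = f' 2 := by simp [hP]
  have hcc : PowerSeries.constantCoeff P = 0 := by simp [hP]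
  have hsq1 : PowerSeries.coeff 1 (P ^ 2) = 0 := by
    rw [pow_two, PowerSeries.coeff_mul, Finset.Nat.sum_antidiagonal_eq_sum_range_succ_mk]
    simp [Finset.sum_range_succ, hc0, hc1]
  have hsq2 : PowerSeries.coeff 2 (P ^ 2) = f' 1 ^ 2 := by
    rw [pow_two, PowerSeries.coeff_mul, Finset.Nat.sum_antidiagonal_eq_sum_range_succ_mk]
    simp [Finset.sum_range_succ, hc0, hc1]
    ring
  have h1 := hser 1
  have h2 := hser 2
  simp [Finset.sum_range_succ, hc0, hc1, hc2, hsq1, hsq2, hcc, hb01, hb02, hb11,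
    Nat.factorial] at h1 h2
  constructor
  · linarith
  · have hb10 : b 1 0 = f 1 := by linarith
    field_simp at h2 ⊢
    have hmul : vn * (b 2 0 * (2 * vn)) = vn * (f 2 * (2 * vn) - f' 1 ^ 2) := by
      linear_combination vn * h2
    linarith [mul_left_cancel₀ hvn hmul]
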